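/- Fix 0 < τ and let z, w ∈ ℂ with |w| = τ < |z|. Then Re( (z−w)·conj(z) / (|z−w|²·|z|) ) ≥ (1/|z|)·(1 − τ/|z|). In particular, this quantity is bounded below by (√(|z|−τ)·√(|z|+τ))/(|z−w|·|z|) ≥ √(|z|−τ)/(|z|·√(|z|+τ)). -/

import Mathlib

/-- The elementary geometric estimate: for `|w| = τ < |z|`,
`Re((z−w)·conj z / (|z−w|²·|z|)) ≥ √(|z|−τ)√(|z|+τ)/(|z−w||z|) ≥ √(|z|−τ)/(|z|√(|z|+τ))`,
and the quantity is bounded below by `(1/|z|)(1 − τ/|z|)`. -/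
theorem stmt4 (τ : ℝ) (hτ : 0 < τ) (z w : ℂ)
    (hw : ‖w‖ = τ) (hz : τ < ‖z‖) :
    (((z - w) * (starRingEnd ℂ) z) /
        ((‖z - w‖ ^ 2 * ‖z‖ : ℝ) : ℂ)).re ≥
      Real.sqrt (‖z‖ - τ) * Real.sqrt (‖z‖ + τ) /
        (‖z - w‖ * ‖z‖) ∧
    Real.sqrt (‖z‖ - τ) * Real.sqrt (‖z‖ + τ) /
        (‖z - w‖ * ‖z‖) ≥
      Real.sqrt (‖z‖ - τ) / (‖z‖ * Real.sqrt (‖z‖ + τ)) ∧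
    (((z - w) * (starRingEnd ℂ) z) /
        ((‖z - w‖ ^ 2 * ‖z‖ : ℝ) : ℂ)).re ≥
      (1 / ‖z‖) * (1 - τ / ‖z‖) := by
  have hzw : z ≠ w := by
    intro h; rw [h, hw] at hz; exact lt_irrefl τ hz
  set a := ‖z‖ with ha_def
  set d := ‖z - w‖ with hd_def
  have ha : 0 < a := lt_trans hτ hz
  have hd : 0 < d := by
    rw [hd_def]
    exact (norm_pos_iff.mpr (sub_ne_zero.mpr hzw))
  have hdle : d ≤ a + τ := by
    have := norm_sub_le z w
    simpa [hw, ← ha_def, ← hd_def] using this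
  -- real part computation
  have hre : (((z - w) * (starRingEnd ℂ) z) /
      ((d ^ 2 * a : ℝ) : ℂ)).re = ((a ^ 2 - τ ^ 2 + d ^ 2) / 2) / (d ^ 2 * a) := by
    rw [Complex.div_ofReal_re]
    congr 1
    have h1 : Complex.normSq (z - w) = Complex.normSq z + Complex.normSq w
        - 2 * (z * (starRingEnd ℂ) w).re := Complex.normSq_sub z w
    have h2 : d ^ 2 = Complex.normSq (z - w) := by rw [hd_def, Complex.sq_norm]
    have h3 : a ^ 2 = Complex.normSq z := by rw [ha_def, Complex.sq_norm]
    have h4 : τ ^ 2 = Complex.normSq w := by rw [← hw, Complex.sq_norm]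
    have h5 : ((z - w) * (starRingEnd ℂ) z).re
        = Complex.normSq z - (z * (starRingEnd ℂ) w).re := by
      simp [Complex.normSq_apply, Complex.mul_re, Complex.sub_re, Complex.sub_im,
        Complex.conj_re, Complex.conj_im]
      ring
    rw [h5]
    rw [h2, h3, h4, h1]
    ring
  have hs2 : Real.sqrt (a - τ) * Real.sqrt (a + τ) = Real.sqrt ((a - τ) * (a + τ)) :=
    (Real.sqrt_mul (by linarith) _).symm
  set s := Real.sqrt ((a - τ) * (a + τ)) with hs_def
  have hs_sq : s ^ 2 = (a - τ) * (a + τ) := Real.sq_sqrt (by nlinarith)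
  have hs_nonneg : 0 ≤ s := Real.sqrt_nonneg _
  refine ⟨?_, ?_, ?_⟩
  · rw [hre, hs2, ge_iff_le, div_le_div_iff₀ (by positivity) (by positivity)]
    nlinarith [sq_nonneg (s - d), mul_pos ha hd, sq_nonneg (s*d - d*d)]
  · rw [hs2, ge_iff_le, div_le_div_iff₀ (by positivity) (by positivity)]
    have hap : (0:ℝ) ≤ a + τ := by linarith
    have key : s * (a * Real.sqrt (a + τ)) = Real.sqrt (a - τ) * (a + τ) * a := by
      rw [← hs2, mul_comm a (Real.sqrt (a + τ)), ← mul_assoc, mul_assoc (Real.sqrt (a - τ)),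
        Real.mul_self_sqrt hap]
    rw [key]
    have h1 : Real.sqrt (a - τ) * (d * a) ≤ Real.sqrt (a - τ) * ((a + τ) * a) := by
      apply mul_le_mul_of_nonneg_left _ (Real.sqrt_nonneg _)
      exact mul_le_mul_of_nonneg_right hdle ha.le
    linarith [h1]
  · have hform : (1 / a) * (1 - τ / a) = (a - τ) / a ^ 2 := by
      rw [sq]; field_simp
    rw [hre, ge_iff_le, hform, div_le_div_iff₀ (by positivity) (by positivity)]
    have key : 2 * (a - τ) * d ^ 2 ≤ (a ^ 2 - τ ^ 2 + d ^ 2) * a := by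
      rcases le_or_gt a (2 * τ) with h | h
      · nlinarith [mul_nonneg (mul_pos hd hd).le (by linarith : (0:ℝ) ≤ 2 * τ - a),
          mul_nonneg (mul_nonneg (by linarith : (0:ℝ) ≤ a - τ)
            (by linarith : (0:ℝ) ≤ a + τ)) ha.le]
      · have hd2 : d ^ 2 ≤ (a + τ) ^ 2 := by nlinarith
        nlinarith [mul_le_mul_of_nonpos_right hd2 (by linarith : 2 * τ - a ≤ 0),
          mul_nonneg (mul_nonneg hτ.le hτ.le) (by linarith : (0:ℝ) ≤ a + τ)]
    nlinarith [mul_le_mul_of_nonneg_left key ha.le]
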